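/- arXiv:2407.08963 — 5 statements merged into one kernel-verified Lean document; each statement's English description precedes it below -/
import Mathlib

section
/- In the graph G on vertices {v1,...,v8} with edges {v1v5, v1v6, v2v5, v2v6, v2v7, v2v8, v4v7, v4v8}, for every vertex cover V of size at most 4, the Hamming distance between the characteristic vectors of V1 = {v1,v2,v7,v8} and V is at most 6, with equality if and only if V = {v2,v4,v5,v6}. -/
/-- The edges of the graph `G` from the paper, on vertices `0,…,7` standing for `v1,…,v8`. -/
def edges : List (Fin 8 × Fin 8) :=
  [(0, 4), (0, 5), (1, 4), (1, 5), (1, 6), (1, 7), (3, 6), (3, 7)]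

/-- `C` is a vertex cover of `G`: every edge has an endpoint in `C`. -/
def IsCover (C : Finset (Fin 8)) : Prop := ∀ e ∈ edges, e.1 ∈ C ∨ e.2 ∈ C

/-- `V1 = {v1, v2, v7, v8}`. -/
def V1 : Finset (Fin 8) := {0, 1, 6, 7}
/-- `V2 = {v2, v4, v5, v6}`. -/
def V2 : Finset (Fin 8) := {1, 3, 4, 5}
/-- `V3 = {v1, v2, v3, v4}`. -/
def V3 : Finset (Fin 8) := {0, 1, 2, 3}
/-- `V4 = {v5, v6, v7, v8}`. -/
def V4 : Finset (Fin 8) := {4, 5, 6, 7}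

/-- The characteristic bit vector of a set of vertices. -/
def chi (C : Finset (Fin 8)) : Fin 8 → Bool := fun i => decide (i ∈ C)

set_option maxRecDepth 20000 in
/-- For every vertex cover `V` of `G` of size at most 4, `H(V1, V) ≤ 6`, with equality
iff `V = V2 = {v2, v4, v5, v6}`. -/
theorem hamming_from_V1_le_six (C : Finset (Fin 8)) (hC : IsCover C) (hcard : C.card ≤ 4) :
    hammingDist (chi V1) (chi C) ≤ 6 ∧ (hammingDist (chi V1) (chi C) = 6 ↔ C = V2) := by
  unfold IsCover at hC
  revert hC hcard
  revert C
  decide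
end

section
/- In the graph G with edges {v1v5, v1v6, v2v5, v2v6, v2v7, v2v8, v4v7, v4v8}, the population (V1, V2) = ({v1,v2,v7,v8}, {v2,v4,v5,v6}) is a strict local optimum for Hamming-distance diversity among size-2 populations of vertex covers of size at most 4: replacing either individual by any different vertex cover of size at most 4 strictly decreases the Hamming distance between the two individuals. -/
instance : DecidablePred IsCover := fun C => by unfold IsCover; infer_instance

set_option maxRecDepth 100000 in
/-- The population `(V1, V2)` is a strict local optimum for Hamming-distance diversity
among size-2 populations of vertex covers of size at most 4: replacing either individual
by any different vertex cover of size at most 4 strictly decreases the Hamming distance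
between the two individuals (which is 6 for `(V1, V2)`). -/
theorem local_optimum_pair :
    hammingDist (chi V1) (chi V2) = 6 ∧
    (∀ C : Finset (Fin 8), IsCover C → C.card ≤ 4 → C ≠ V1 →
      hammingDist (chi C) (chi V2) < hammingDist (chi V1) (chi V2)) ∧
    (∀ C : Finset (Fin 8), IsCover C → C.card ≤ 4 → C ≠ V2 →
      hammingDist (chi V1) (chi C) < hammingDist (chi V1) (chi V2)) := by
  decide
end

section
/- Let μ ≥ 4 be even, ν = μ/2 - 1, and let P be the population with one copy each of V1 = {v1,v2,v7,v8} and V2 = {v2,v4,v5,v6}, and ν copies each of V3 = {v1,v2,v3,v4} and V4 = {v5,v6,v7,v8}, viewed as characteristic vectors in {0,1}^8 of vertex covers of the graph G with edges {v1v5, v1v6, v2v5, v2v6, v2v7, v2v8, v4v7, v4v8}. Then replacing any single individual of P by any vertex cover of G of size at most 4 different from that individual strictly decreases the total Hamming distance of the population. -/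
/-- The population with one copy each of `V1`, `V2` and `ν` copies each of `V3`, `V4`,
as a multiset of bit strings in `{0,1}^8`. -/
def pop (ν : ℕ) : Multiset (Fin 8 → Bool) :=
  {chi V1, chi V2} + Multiset.replicate ν (chi V3) + Multiset.replicate ν (chi V4)

/-- `n_i`: the number of members of the population `P` with a one-bit at position `i`. -/
def ones (P : Multiset (Fin 8 → Bool)) (i : Fin 8) : ℕ := P.countP (fun x => x i = true)

/-- The total Hamming distance of a population `P`, computed as `∑ i, n_i (|P| - n_i)`. -/
def totalHD (P : Multiset (Fin 8 → Bool)) : ℕ :=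
  ∑ i : Fin 8, ones P i * (Multiset.card P - ones P i)

namespace LOPaux

def g (b : ℕ) : ℕ := 4 * b + 4 - b ^ 2

def ind (S : Finset (Fin 8)) (i : Fin 8) : ℕ := if i ∈ S then 1 else 0

lemma ind_le (S : Finset (Fin 8)) (i : Fin 8) : ind S i ≤ 1 := by
  unfold ind; split <;> omega

lemma lemA (k b : ℕ) (hb : b ≤ 4) : (k + b) * (k + 4 - b) + 4 = k * (k + 4) + g b := by
  interval_cases b <;> simp [g] <;> ring

lemma bridge (k : ℕ) (b a : Fin 8 → ℕ) (hb : ∀ i, b i ≤ 4) (ha : ∀ i, a i ≤ 4)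
    (h : (∑ i, g (b i)) < ∑ i, g (a i)) :
    (∑ i : Fin 8, (k + b i) * (k + 4 - b i)) < ∑ i : Fin 8, (k + a i) * (k + 4 - a i) := by
  have e : ∀ c : Fin 8 → ℕ, (∀ i, c i ≤ 4) →
      (∑ i : Fin 8, (k + c i) * (k + 4 - c i)) + 32 = 8 * (k * (k + 4)) + ∑ i, g (c i) := by
    intro c hc
    have h2 : (∑ i : Fin 8, ((k + c i) * (k + 4 - c i) + 4))
        = ∑ i : Fin 8, (k * (k + 4) + g (c i)) :=
      Finset.sum_congr rfl (fun i _ => lemA k (c i) (hc i))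
    simp only [Finset.sum_add_distrib, Finset.sum_const, Finset.card_univ, Fintype.card_fin,
      smul_eq_mul] at h2
    omega
  have eb := e b hb
  have ea := e a ha
  set X := k * (k + 4)
  omega

set_option maxRecDepth 10000 in
lemma key : ∀ W ∈ [V1, V2, V3, V4], ∀ C : Finset (Fin 8), IsCover C → C.card ≤ 4 → C ≠ W →
    (∑ i : Fin 8, g (1 + ind V1 i + ind V2 i - ind W i + ind C i)) <
      ∑ i : Fin 8, g (1 + ind V1 i + ind V2 i) := by
  unfold IsCover
  decide

end LOPaux

namespace LOPaux

open Multiset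

def rest1 (k : ℕ) : Multiset (Fin 8 → Bool) :=
  chi V2 ::ₘ (replicate (k+1) (chi V3) + replicate (k+1) (chi V4))
def rest2 (k : ℕ) : Multiset (Fin 8 → Bool) :=
  chi V1 ::ₘ (replicate (k+1) (chi V3) + replicate (k+1) (chi V4))
def rest3 (k : ℕ) : Multiset (Fin 8 → Bool) :=
  chi V1 ::ₘ chi V2 ::ₘ (replicate k (chi V3) + replicate (k+1) (chi V4))
def rest4 (k : ℕ) : Multiset (Fin 8 → Bool) :=
  chi V1 ::ₘ chi V2 ::ₘ (replicate (k+1) (chi V3) + replicate k (chi V4))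

lemma pop_eq1 (k : ℕ) : pop (k+1) = chi V1 ::ₘ rest1 k := by
  simp only [pop, rest1, ← singleton_add, insert_eq_cons, replicate_succ]
  abel

lemma pop_eq2 (k : ℕ) : pop (k+1) = chi V2 ::ₘ rest2 k := by
  simp only [pop, rest2, ← singleton_add, insert_eq_cons, replicate_succ]
  abel

lemma pop_eq3 (k : ℕ) : pop (k+1) = chi V3 ::ₘ rest3 k := by
  simp only [pop, rest3, ← singleton_add, insert_eq_cons, replicate_succ]
  abel

lemma pop_eq4 (k : ℕ) : pop (k+1) = chi V4 ::ₘ rest4 k := by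
  simp only [pop, rest4, ← singleton_add, insert_eq_cons, replicate_succ]
  abel

end LOPaux

namespace LOPaux
open Multiset

lemma countP_replicate' {α : Type*} (p : α → Prop) [DecidablePred p] (n : ℕ) (a : α) :
    countP p (replicate n a) = if p a then n else 0 := by
  induction n with
  | zero => simp
  | succ n ih => simp [replicate_succ, countP_cons, ih]; split <;> omega

lemma ones_pop (k : ℕ) (i : Fin 8) :
    ones (pop (k+1)) i = k + (1 + ind V1 i + ind V2 i) := by
  fin_cases i <;>
    simp [ones, pop, countP_add, countP_replicate', insert_eq_cons, countP_cons,
      chi, ind, V1, V2, V3, V4] <;> omega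

end LOPaux

namespace LOPaux
open Multiset

lemma ones_cons_chi (C : Finset (Fin 8)) (s : Multiset (Fin 8 → Bool)) (i : Fin 8) :
    ones (chi C ::ₘ s) i = ones s i + ind C i := by
  simp [ones, countP_cons, chi, ind]

lemma ones_new1 (k : ℕ) (C : Finset (Fin 8)) (i : Fin 8) :
    ones (chi C ::ₘ rest1 k) i = k + (1 + ind V1 i + ind V2 i - ind V1 i + ind C i) := by
  rw [ones_cons_chi]
  have hc : ind C i ≤ 1 := ind_le C i
  set c := ind C i
  fin_cases i <;>
    simp [ones, rest1, countP_add, countP_replicate', countP_cons,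
      chi, ind, V1, V2, V3, V4] <;> omega

lemma ones_new2 (k : ℕ) (C : Finset (Fin 8)) (i : Fin 8) :
    ones (chi C ::ₘ rest2 k) i = k + (1 + ind V1 i + ind V2 i - ind V2 i + ind C i) := by
  rw [ones_cons_chi]
  have hc : ind C i ≤ 1 := ind_le C i
  set c := ind C i
  fin_cases i <;>
    simp [ones, rest2, countP_add, countP_replicate', countP_cons,
      chi, ind, V1, V2, V3, V4] <;> omega

lemma ones_new3 (k : ℕ) (C : Finset (Fin 8)) (i : Fin 8) :
    ones (chi C ::ₘ rest3 k) i = k + (1 + ind V1 i + ind V2 i - ind V3 i + ind C i) := by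
  rw [ones_cons_chi]
  have hc : ind C i ≤ 1 := ind_le C i
  set c := ind C i
  fin_cases i <;>
    simp [ones, rest3, countP_add, countP_replicate', countP_cons,
      chi, ind, V1, V2, V3, V4] <;> omega

lemma ones_new4 (k : ℕ) (C : Finset (Fin 8)) (i : Fin 8) :
    ones (chi C ::ₘ rest4 k) i = k + (1 + ind V1 i + ind V2 i - ind V4 i + ind C i) := by
  rw [ones_cons_chi]
  have hc : ind C i ≤ 1 := ind_le C i
  set c := ind C i
  fin_cases i <;>
    simp [ones, rest4, countP_add, countP_replicate', countP_cons,
      chi, ind, V1, V2, V3, V4] <;> omega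

lemma card_pop (k : ℕ) : Multiset.card (pop (k+1)) = 2*k + 4 := by
  simp [pop]; ring

lemma card_new1 (k : ℕ) (C : Finset (Fin 8)) :
    Multiset.card (chi C ::ₘ rest1 k) = 2*k + 4 := by simp [rest1]; ring
lemma card_new2 (k : ℕ) (C : Finset (Fin 8)) :
    Multiset.card (chi C ::ₘ rest2 k) = 2*k + 4 := by simp [rest2]; ring
lemma card_new3 (k : ℕ) (C : Finset (Fin 8)) :
    Multiset.card (chi C ::ₘ rest3 k) = 2*k + 4 := by simp [rest3]; ring
lemma card_new4 (k : ℕ) (C : Finset (Fin 8)) :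
    Multiset.card (chi C ::ₘ rest4 k) = 2*k + 4 := by simp [rest4]; ring

end LOPaux

namespace LOPaux
open Multiset

lemma finish (k : ℕ) (C W : Finset (Fin 8)) (hW : W ∈ [V1, V2, V3, V4])
    (R : Multiset (Fin 8 → Bool))
    (hones_new : ∀ i, ones (chi C ::ₘ R) i
      = k + (1 + ind V1 i + ind V2 i - ind W i + ind C i))
    (hcard_new : Multiset.card (chi C ::ₘ R) = 2*k + 4)
    (hC : IsCover C) (hcard : C.card ≤ 4) (hne : C ≠ W) :
    totalHD (chi C ::ₘ R) < totalHD (pop (k+1)) := by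
  unfold totalHD
  rw [hcard_new, card_pop]
  have ha : ∀ i : Fin 8, 1 + ind V1 i + ind V2 i ≤ 4 := fun i => by
    have := ind_le V1 i; have := ind_le V2 i; omega
  have hb : ∀ i : Fin 8, 1 + ind V1 i + ind V2 i - ind W i + ind C i ≤ 4 := fun i => by
    have := ind_le V1 i; have := ind_le V2 i; have := ind_le C i; omega
  have el : (∑ i : Fin 8, ones (chi C ::ₘ R) i * (2*k+4 - ones (chi C ::ₘ R) i))
      = ∑ i : Fin 8, (k + (1 + ind V1 i + ind V2 i - ind W i + ind C i))
          * (k + 4 - (1 + ind V1 i + ind V2 i - ind W i + ind C i)) :=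
    Finset.sum_congr rfl fun i _ => by
      rw [hones_new i]; congr 1; have := hb i; omega
  have er : (∑ i : Fin 8, ones (pop (k+1)) i * (2*k+4 - ones (pop (k+1)) i))
      = ∑ i : Fin 8, (k + (1 + ind V1 i + ind V2 i))
          * (k + 4 - (1 + ind V1 i + ind V2 i)) :=
    Finset.sum_congr rfl fun i _ => by
      rw [ones_pop k i]; congr 1; have := ha i; omega
  rw [el, er]
  exact bridge k _ _ hb ha (key W hW C hC hcard hne)

end LOPaux


/-- For even `μ ≥ 4`, replacing any single individual of the population (one copy each of
`V1`, `V2`, and `μ/2 - 1` copies each of `V3`, `V4`) by any vertex cover of `G` of size at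
most 4 different from that individual strictly decreases the total Hamming distance. -/
theorem local_optimum_population (μ : ℕ) (hμ : 4 ≤ μ) (heven : Even μ) :
    ∀ v ∈ pop (μ / 2 - 1), ∀ C : Finset (Fin 8), IsCover C → C.card ≤ 4 → chi C ≠ v →
      totalHD (chi C ::ₘ (pop (μ / 2 - 1)).erase v) < totalHD (pop (μ / 2 - 1)) := by
  intro v hv C hC hcard hne
  obtain ⟨m, rfl⟩ := heven
  obtain ⟨k, hk⟩ : ∃ k, (m + m) / 2 - 1 = k + 1 := ⟨m - 2, by omega⟩
  rw [hk] at hv ⊢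
  have hmem : v = chi V1 ∨ v = chi V2 ∨ v = chi V3 ∨ v = chi V4 := by
    simp [pop, Multiset.mem_replicate] at hv
    tauto
  have hne' : ∀ W : Finset (Fin 8), chi C ≠ chi W → C ≠ W := by
    intro W h hCW; exact h (by rw [hCW])
  rcases hmem with rfl | rfl | rfl | rfl
  · rw [show (pop (k+1)).erase (chi V1) = LOPaux.rest1 k from by
      rw [LOPaux.pop_eq1 k, Multiset.erase_cons_head]]
    exact LOPaux.finish k C V1 (List.Mem.head _) _ (LOPaux.ones_new1 k C)
      (LOPaux.card_new1 k C) hC hcard (hne' V1 hne)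
  · rw [show (pop (k+1)).erase (chi V2) = LOPaux.rest2 k from by
      rw [LOPaux.pop_eq2 k, Multiset.erase_cons_head]]
    exact LOPaux.finish k C V2 (List.Mem.tail _ (List.Mem.head _)) _ (LOPaux.ones_new2 k C)
      (LOPaux.card_new2 k C) hC hcard (hne' V2 hne)
  · rw [show (pop (k+1)).erase (chi V3) = LOPaux.rest3 k from by
      rw [LOPaux.pop_eq3 k, Multiset.erase_cons_head]]
    exact LOPaux.finish k C V3 (List.Mem.tail _ (List.Mem.tail _ (List.Mem.head _))) _ (LOPaux.ones_new3 k C)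
      (LOPaux.card_new3 k C) hC hcard (hne' V3 hne)
  · rw [show (pop (k+1)).erase (chi V4) = LOPaux.rest4 k from by
      rw [LOPaux.pop_eq4 k, Multiset.erase_cons_head]]
    exact LOPaux.finish k C V4 (List.Mem.tail _ (List.Mem.tail _ (List.Mem.tail _ (List.Mem.head _)))) _ (LOPaux.ones_new4 k C)
      (LOPaux.card_new4 k C) hC hcard (hne' V4 hne)
end

section
/- Let μ ≥ 4 be even and let P be the population (as a multiset of vectors in {0,1}^8) with one copy each of V1 = {v1,v2,v7,v8} and V2 = {v2,v4,v5,v6} and μ/2 - 1 copies each of V3 = {v1,v2,v3,v4} and V4 = {v5,v6,v7,v8}; let Q be the population with μ/2 copies each of V3 and V4. Then D(P) < D(Q), where D is the total Hamming distance. -/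
lemma countP_singleton' {α} (p : α → Prop) [DecidablePred p] (a : α) :
    (({a} : Multiset α)).countP p = if p a then 1 else 0 := by
  rw [← Multiset.cons_zero, Multiset.countP_cons, Multiset.countP_zero, zero_add]

lemma countP_replicate' {α} (p : α → Prop) [DecidablePred p] (n : ℕ) (a : α) :
    (Multiset.replicate n a).countP p = if p a then n else 0 := by
  induction n with
  | zero => simp
  | succ k ih => rw [Multiset.replicate_succ, Multiset.countP_cons, ih]; split <;> simp

lemma totalHD_eq (P : Multiset (Fin 8 → Bool)) :
    totalHD P = ∑ i : Fin 8, P.countP (fun x => x i = true) *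
      P.countP (fun x => ¬ x i = true) := by
  unfold totalHD ones
  refine Finset.sum_congr rfl fun i _ => ?_
  rw [Multiset.card_eq_countP_add_countP (fun x => x i = true), Nat.add_sub_cancel_left]

set_option maxHeartbeats 1000000 in
/-- For even `μ ≥ 4`, the population `P` (one copy each of `V1`, `V2`, and `μ/2 - 1` copies
each of `V3`, `V4`) has strictly smaller total Hamming distance than the population `Q`
with `μ/2` copies each of `V3` and `V4`. -/
theorem suboptimal_diversity (μ : ℕ) (hμ : 4 ≤ μ) (heven : Even μ) :
    totalHD (pop (μ / 2 - 1)) <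
      totalHD (Multiset.replicate (μ / 2) (chi V3) + Multiset.replicate (μ / 2) (chi V4)) := by
  obtain ⟨m, hm2, hμ2⟩ : ∃ m, 2 ≤ m ∧ μ / 2 = m := ⟨μ/2, by omega, rfl⟩
  rw [hμ2]
  simp only [totalHD_eq, pop, Multiset.countP_add, countP_replicate', countP_singleton',
    Multiset.insert_eq_cons, Multiset.countP_cons, Multiset.countP_zero, Fin.sum_univ_eight]
  simp only [chi, V1, V2, V3, V4, decide_eq_true_eq, decide_eq_false_iff_not,
    Finset.mem_insert, Finset.mem_singleton, Fin.reduceEq, or_false, false_or, or_true,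
    true_or, not_true, not_false_iff, if_true, if_false, if_neg, if_pos, not_or]
  norm_num
  obtain ⟨k, rfl⟩ : ∃ k, m = k + 2 := ⟨m - 2, by omega⟩
  simp only [Nat.add_sub_cancel, show k + 2 - 1 = k + 1 from rfl]
  nlinarith [k.zero_le]
end

section
/- Let x be a vertex cover with |x| ≤ k and y a non-excessive vertex cover of a graph G. If each vertex of x is independently removed with probability 1/2 (forming removed set S) and then all neighbors of vertices in S are added to x \ S, the probability that the resulting set equals y is at least 2^{-k}; it equals 2^{-|x|}. -/
open Finset

/-- If each vertex of a cover `x` (with `|x| ≤ k`) is removed independently with probability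
`1/2` (the removed set `S` being uniform over subsets of `x`) and all neighbours of removed
vertices are added to `x \ S`, then the probability that the result equals a given
non-excessive cover `y` equals `2^{-|x|}`, and hence is at least `2^{-k}`. -/
theorem jump_and_repair_probability {V : Type*} [Fintype V] [DecidableEq V]
    (G : SimpleGraph V) [DecidableRel G.Adj] (k : ℕ) (x y : Finset V)
    (hx : ∀ u w, G.Adj u w → u ∈ x ∨ w ∈ x)
    (hxk : x.card ≤ k)
    (hy : ∀ u w, G.Adj u w → u ∈ y ∨ w ∈ y)
    (hyne : ∀ v ∈ y, ¬ (∀ u w, G.Adj u w → u ∈ y.erase v ∨ w ∈ y.erase v)) :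
    ((x.powerset.filter
        (fun S => (x \ S) ∪ S.biUnion (fun v => G.neighborFinset v) = y)).card : ℝ)
          / 2 ^ x.card
      = (1 / 2 : ℝ) ^ x.card ∧
    (1 / 2 : ℝ) ^ k ≤
      ((x.powerset.filter
        (fun S => (x \ S) ∪ S.biUnion (fun v => G.neighborFinset v) = y)).card : ℝ)
          / 2 ^ x.card := by
  -- For every v ∈ y there is a neighbor z ∉ y (non-excessiveness).
  have key : ∀ v ∈ y, ∃ z, G.Adj v z ∧ z ∉ y := by
    intro v hv
    have h := hyne v hv
    push_neg at h
    obtain ⟨u, w, huw, hu, hw⟩ := h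
    rcases hy u w huw with h1 | h1
    · have huv : u = v := by
        by_contra hne
        exact hu (Finset.mem_erase.mpr ⟨hne, h1⟩)
      refine ⟨w, huv ▸ huw, ?_⟩
      intro hwy
      have : w = v := by
        by_contra hne
        exact hw (Finset.mem_erase.mpr ⟨hne, hwy⟩)
      exact G.loopless.irrefl v (by rw [huv, this] at huw; exact huw)
    · have hwv : w = v := by
        by_contra hne
        exact hw (Finset.mem_erase.mpr ⟨hne, h1⟩)
      refine ⟨u, (hwv ▸ huw).symm, ?_⟩
      intro huy
      have : u = v := by
        by_contra hne
        exact hu (Finset.mem_erase.mpr ⟨hne, huy⟩)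
      exact G.loopless.irrefl v (by rw [hwv, this] at huw; exact huw)
  have hset : x.powerset.filter
      (fun S => (x \ S) ∪ S.biUnion (fun v => G.neighborFinset v) = y) = {x \ y} := by
    ext S
    simp only [Finset.mem_filter, Finset.mem_powerset, Finset.mem_singleton]
    constructor
    · rintro ⟨hSx, hS⟩
      apply Finset.Subset.antisymm
      · intro v hv
        refine Finset.mem_sdiff.mpr ⟨hSx hv, ?_⟩
        intro hvy
        obtain ⟨z, hadj, hz⟩ := key v hvy
        apply hz
        rw [← hS]
        exact Finset.mem_union_right _ (Finset.mem_biUnion.mpr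
          ⟨v, hv, (G.mem_neighborFinset v z).mpr hadj⟩)
      · intro v hv
        rw [Finset.mem_sdiff] at hv
        by_contra hvS
        have : v ∈ (x \ S) ∪ S.biUnion (fun v => G.neighborFinset v) :=
          Finset.mem_union_left _ (Finset.mem_sdiff.mpr ⟨hv.1, hvS⟩)
        rw [hS] at this
        exact hv.2 this
    · rintro rfl
      refine ⟨Finset.sdiff_subset, ?_⟩
      apply Finset.Subset.antisymm
      · intro v hv
        rcases Finset.mem_union.mp hv with h | h
        · simp only [Finset.mem_sdiff, not_and, not_not] at h
          exact h.2 h.1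
        · obtain ⟨u, hu, hadj⟩ := Finset.mem_biUnion.mp h
          rw [G.mem_neighborFinset] at hadj
          rw [Finset.mem_sdiff] at hu
          rcases hy u v hadj with h1 | h1
          · exact absurd h1 hu.2
          · exact h1
      · intro v hv
        obtain ⟨z, hadj, hz⟩ := key v hv
        rcases hx v z hadj with h1 | h1
        · exact Finset.mem_union_left _ (by
            simp only [Finset.mem_sdiff, not_and, not_not]
            exact ⟨h1, fun _ => hv⟩)
        · exact Finset.mem_union_right _ (Finset.mem_biUnion.mpr
            ⟨z, Finset.mem_sdiff.mpr ⟨h1, hz⟩, (G.mem_neighborFinset z v).mpr hadj.symm⟩)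
  rw [hset]
  simp only [Finset.card_singleton, Nat.cast_one]
  have heq : (1 : ℝ) / 2 ^ x.card = (1 / 2 : ℝ) ^ x.card := by
    rw [div_pow, one_pow]
  refine ⟨heq, ?_⟩
  rw [heq]
  exact pow_le_pow_of_le_one (by norm_num) (by norm_num) hxk
end
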